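/- Fix n ∈ ℕ, let G = (ℤ/2)^n, let ε : F2[G] → F2 be the augmentation homomorphism and 𝓘 = ker ε the augmentation ideal, with the convention 𝓘^0 = F2[G]. Then for every m ≥ 0, the dimension over F2 of the quotient 𝓘^m / 𝓘^{m+1} equals the binomial coefficient C(n, m). -/

import Mathlib

/-- The group `G = (ℤ/2)ⁿ`, written multiplicatively. -/
abbrev GrpG (n : ℕ) : Type := Multiplicative (Fin n → ZMod 2)

/-- The augmentation homomorphism `ε : F2[G] → F2` sending every group element to `1`. -/
noncomputable def aug (n : ℕ) : MonoidAlgebra (ZMod 2) (GrpG n) →ₐ[ZMod 2] ZMod 2 :=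
  MonoidAlgebra.lift (ZMod 2) (ZMod 2) (GrpG n) 1

/-- The augmentation ideal `𝓘 = ker ε` of the group algebra `F2[(ℤ/2)ⁿ]`
(with the convention `𝓘^0 = F2[G]`, which is automatic for ideal powers). -/
noncomputable def augIdeal (n : ℕ) : Ideal (MonoidAlgebra (ZMod 2) (GrpG n)) :=
  RingHom.ker (aug n)

noncomputable section AuxStmt14

namespace AuxStmt14

abbrev A (n : ℕ) := MonoidAlgebra (ZMod 2) (GrpG n)

variable {n : ℕ}

def g (v : Fin n → ZMod 2) : A n := MonoidAlgebra.of (ZMod 2) (GrpG n) (Multiplicative.ofAdd v)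

lemma g_mul (v w : Fin n → ZMod 2) : g v * g w = g (v + w) := by
  simp [g, ← map_mul, ← ofAdd_add]

lemma g_zero : g (0 : Fin n → ZMod 2) = 1 := by
  simp [g]; rfl

lemma g_sq (v : Fin n → ZMod 2) : g v * g v = 1 := by
  rw [g_mul]
  have : v + v = 0 := by
    funext i; exact (CharTwo.add_self_eq_zero (v i))
  rw [this, g_zero]

lemma aug_g (v : Fin n → ZMod 2) : aug n (g v) = 1 := by
  simp [aug, g]

def chi (S : Finset (Fin n)) : Fin n → ZMod 2 := fun i => if i ∈ S then 1 else 0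

lemma chi_bijective : Function.Bijective (chi (n := n)) := by
  constructor
  · intro S T h
    ext i
    have := congrFun h i
    by_cases hS : i ∈ S <;> by_cases hT : i ∈ T <;> simp [chi, hS, hT] at this ⊢
  · intro v
    refine ⟨Finset.univ.filter (fun i => v i = 1), ?_⟩
    funext i
    by_cases h : v i = 1 <;> simp [chi, h]
    exact (by decide : ∀ x : ZMod 2, x ≠ 1 → 0 = x) _ h

lemma chi_insert {i : Fin n} {S : Finset (Fin n)} (h : i ∉ S) :
    chi (insert i S) = Pi.single i 1 + chi S := by
  funext j
  by_cases hj : j = i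
  · subst hj; simp [chi, h]
  · simp [chi, hj, Pi.single_apply]

def e (i : Fin n) : A n := g (Pi.single i 1) + 1

lemma e_mem (i : Fin n) : e i ∈ augIdeal n := by
  simp [augIdeal, RingHom.mem_ker, e, map_add, aug_g]
  rfl

lemma e_sq (i : Fin n) : e i * e i = 0 := by
  have h2 : (2 : A n) = 0 := by
    rw [show (2 : A n) = algebraMap (ZMod 2) (A n) 2 by rw [map_ofNat]]
    rw [show (2 : ZMod 2) = 0 by decide, map_zero]
  simp only [e, add_mul, mul_add, one_mul, mul_one, g_sq]
  ring_nf
  rw [h2]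
  ring

def E (S : Finset (Fin n)) : A n := ∏ i ∈ S, e i

lemma E_empty : E (∅ : Finset (Fin n)) = 1 := by simp [E]

lemma E_insert {i : Fin n} {S : Finset (Fin n)} (h : i ∉ S) :
    E (insert i S) = e i * E S := by
  simp [E, Finset.prod_insert h]

lemma E_mul_E (S T : Finset (Fin n)) :
    E S * E T = if Disjoint S T then E (S ∪ T) else 0 := by
  split_ifs with h
  · rw [E, E, E, ← Finset.prod_union h]
  · obtain ⟨i, hiS, hiT⟩ := Finset.not_disjoint_iff.mp h
    have hS : E S = e i * E (S.erase i) := by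
      rw [← E_insert (Finset.notMem_erase i S), Finset.insert_erase hiS]
    have hT : E T = e i * E (T.erase i) := by
      rw [← E_insert (Finset.notMem_erase i T), Finset.insert_erase hiT]
    rw [hS, hT]
    calc e i * E (S.erase i) * (e i * E (T.erase i))
        = (e i * e i) * (E (S.erase i) * E (T.erase i)) := by ring
      _ = 0 := by rw [e_sq]; ring

lemma E_expand (S : Finset (Fin n)) : E S = ∑ T ∈ S.powerset, g (chi T) := by
  classical
  induction S using Finset.induction_on with
  | empty =>
    rw [E_empty]
    have : chi (∅ : Finset (Fin n)) = 0 := by funext j; simp [chi]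
    simp [this, g_zero]
  | @insert i S hiS ih =>
    rw [E_insert hiS, ih, Finset.sum_powerset_insert hiS]
    rw [e, add_mul, one_mul, Finset.mul_sum]
    rw [add_comm]
    congr 1
    apply Finset.sum_congr rfl
    intro T hT
    rw [Finset.mem_powerset] at hT
    have hiT : i ∉ T := fun h => hiS (hT h)
    rw [g_mul, ← chi_insert hiT]

lemma g_chi_expand (S : Finset (Fin n)) : g (chi S) = ∑ T ∈ S.powerset, E T := by
  classical
  induction S using Finset.induction_on with
  | empty =>
    have : chi (∅ : Finset (Fin n)) = 0 := by funext j; simp [chi]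
    simp [this, g_zero, E_empty]
  | @insert i S hiS ih =>
    rw [chi_insert hiS, ← g_mul, ih, Finset.sum_powerset_insert hiS]
    rw [show g (Pi.single i 1) = e i + 1 by
      rw [e]
      have h2 : (2 : A n) = 0 := by
        rw [show (2 : A n) = algebraMap (ZMod 2) (A n) 2 by rw [map_ofNat]]
        rw [show (2 : ZMod 2) = 0 by decide, map_zero]
      have := h2
      ring_nf
      rw [h2]
      ring]
    rw [add_mul, one_mul, Finset.mul_sum]
    rw [add_comm]
    congr 1
    apply Finset.sum_congr rfl
    intro T hT
    rw [Finset.mem_powerset] at hT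
    have hiT : i ∉ T := fun h => hiS (hT h)
    rw [E_insert hiT]

def bG : Module.Basis (GrpG n) (ZMod 2) (A n) := MonoidAlgebra.basis (GrpG n) (ZMod 2)

lemma bG_apply (z : GrpG n) : bG z = g (Multiplicative.toAdd z) := by
  simp [bG, g, MonoidAlgebra.of_apply]

instance : Module.Finite (ZMod 2) (A n) := Module.Finite.of_basis (bG (n := n))

lemma finrank_A : Module.finrank (ZMod 2) (A n) = 2 ^ n := by
  rw [Module.finrank_eq_card_basis (bG (n := n))]
  simp [GrpG]

lemma top_le_span_E : ⊤ ≤ Submodule.span (ZMod 2) (Set.range (E (n := n))) := by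
  rw [← bG.span_eq]
  apply Submodule.span_le.mpr
  rintro _ ⟨z, rfl⟩
  rw [bG_apply]
  obtain ⟨S, hS⟩ := chi_bijective.2 (Multiplicative.toAdd z)
  rw [← hS, g_chi_expand]
  exact Submodule.sum_mem _ fun T _ => Submodule.subset_span ⟨T, rfl⟩

def B : Module.Basis (Finset (Fin n)) (ZMod 2) (A n) :=
  basisOfTopLeSpanOfCardEqFinrank E top_le_span_E
    (by rw [finrank_A]; simp)

lemma B_apply (S : Finset (Fin n)) : B S = E S := by
  rw [B, coe_basisOfTopLeSpanOfCardEqFinrank]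

lemma h2 : (2 : A n) = 0 := by
  rw [show (2 : A n) = algebraMap (ZMod 2) (A n) 2 by rw [map_ofNat]]
  rw [show (2 : ZMod 2) = 0 by decide, map_zero]

/-- The span of products over subsets of size at least `m`. -/
def N (n m : ℕ) : Submodule (ZMod 2) (A n) :=
  Submodule.span (ZMod 2) (E '' {S : Finset (Fin n) | m ≤ S.card})

lemma I_le_span : (augIdeal n : Set (A n)) ⊆
    (Submodule.span (ZMod 2) (Set.range (fun v : Fin n → ZMod 2 => g v + 1)) : Set (A n)) := by
  intro x hx
  have haug : aug n x = ∑ z ∈ x.coeff.support, x.coeff z := by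
    rw [aug, MonoidAlgebra.lift_apply]
    simp [Finsupp.sum]
  have hx0 : ∑ z ∈ x.coeff.support, x.coeff z = 0 := by
    rw [← haug]; exact RingHom.mem_ker.mp hx
  have hdecomp : x = ∑ z ∈ x.coeff.support, x.coeff z • (g (Multiplicative.toAdd z) + 1) := by
    have h1 : x = ∑ z ∈ x.coeff.support, x.coeff z • g (Multiplicative.toAdd z) := by
      conv_lhs => rw [← MonoidAlgebra.sum_coeff_single x]
      rw [Finsupp.sum]
      apply Finset.sum_congr rfl
      intro z _
      rw [g, MonoidAlgebra.of_apply]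
      rw [show Multiplicative.ofAdd (Multiplicative.toAdd z) = z from rfl]
      rw [MonoidAlgebra.smul_single', mul_one]
    rw [Finset.sum_congr rfl (fun z _ => smul_add (x.coeff z) (g (Multiplicative.toAdd z)) 1),
      Finset.sum_add_distrib, ← h1, ← Finset.sum_smul, hx0, zero_smul, add_zero]
  rw [hdecomp]
  exact Submodule.sum_mem _ fun z _ =>
    Submodule.smul_mem _ _ (Submodule.subset_span ⟨Multiplicative.toAdd z, rfl⟩)

lemma g_add_one_mem_N1 (v : Fin n → ZMod 2) (k : ℕ) (S : Finset (Fin n)) (hk : k ≤ S.card) :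
    (g v + 1) * E S ∈ N n (k + 1) := by
  obtain ⟨V, rfl⟩ := chi_bijective.2 v
  have hmem : (∅ : Finset (Fin n)) ∈ V.powerset := Finset.empty_mem_powerset V
  have hsplit : g (chi V) = E ∅ + ∑ T ∈ V.powerset.erase ∅, E T := by
    rw [g_chi_expand, ← Finset.add_sum_erase _ _ hmem]
  rw [hsplit, E_empty]
  have : (1 : A n) + ∑ T ∈ V.powerset.erase ∅, E T + 1
      = ∑ T ∈ V.powerset.erase ∅, E T := by
    have h11 : (1 : A n) + 1 = 0 := by rw [one_add_one_eq_two, h2]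
    calc (1 : A n) + ∑ T ∈ V.powerset.erase ∅, E T + 1
        = ∑ T ∈ V.powerset.erase ∅, E T + ((1:A n) + 1) := by ring
      _ = _ := by rw [h11, add_zero]
  rw [this, Finset.sum_mul]
  apply Submodule.sum_mem
  intro T hT
  have hTne : T ≠ ∅ := (Finset.mem_erase.mp hT).1
  have hTcard : 1 ≤ T.card := Finset.card_pos.mpr (Finset.nonempty_iff_ne_empty.mpr hTne)
  rw [E_mul_E]
  split_ifs with hdisj
  · apply Submodule.subset_span
    refine ⟨T ∪ S, ?_, rfl⟩
    have := Finset.card_union_of_disjoint hdisj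
    simp only [Set.mem_setOf_eq, this]
    omega
  · exact Submodule.zero_mem _

lemma I_mul_N {y : A n} (hy : y ∈ augIdeal n) {i : ℕ} {x : A n} (hx : x ∈ N n i) :
    y * x ∈ N n (i + 1) := by
  have hy' := I_le_span hy
  induction hx using Submodule.span_induction with
  | mem x hxmem =>
    obtain ⟨S, hS, rfl⟩ := hxmem
    clear hy
    induction hy' using Submodule.span_induction with
    | mem y hymem =>
      obtain ⟨v, rfl⟩ := hymem
      exact g_add_one_mem_N1 v i S hS
    | zero => rw [zero_mul]; exact Submodule.zero_mem _
    | add a b _ _ ha hb => rw [add_mul]; exact Submodule.add_mem _ ha hb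
    | smul c a _ ha => rw [smul_mul_assoc]; exact Submodule.smul_mem _ _ ha
  | zero => rw [mul_zero]; exact Submodule.zero_mem _
  | add a b _ _ ha hb => rw [mul_add]; exact Submodule.add_mem _ ha hb
  | smul c a _ ha => rw [mul_smul_comm]; exact Submodule.smul_mem _ _ ha

lemma E_mem_pow (S : Finset (Fin n)) : E S ∈ augIdeal n ^ S.card := by
  classical
  induction S using Finset.induction_on with
  | empty => simp [E_empty]
  | @insert i S hiS ih =>
    rw [E_insert hiS, Finset.card_insert_of_notMem hiS, pow_succ']
    exact Submodule.mul_mem_mul (e_mem i) ih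

lemma restrict_pow_eq (m : ℕ) :
    Submodule.restrictScalars (ZMod 2) (augIdeal n ^ m) = N n m := by
  apply le_antisymm
  · intro x hx
    have hx' : x ∈ augIdeal n ^ m := hx
    clear hx
    induction hx' using Submodule.pow_induction_on_left' with
    | algebraMap r =>
      have : N n 0 = ⊤ := by
        apply le_antisymm le_top
        refine le_trans top_le_span_E (Submodule.span_mono ?_)
        rintro _ ⟨S, rfl⟩
        exact ⟨S, by simp, rfl⟩
      rw [this]
      trivial
    | add a b i _ _ ha hb => exact Submodule.add_mem _ ha hb
    | mem_mul y hy i a _ ha => exact I_mul_N hy ha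
  · rw [N, Submodule.span_le]
    rintro _ ⟨S, hS, rfl⟩
    have h1 : E S ∈ augIdeal n ^ S.card := E_mem_pow S
    exact Ideal.pow_le_pow_right hS h1

lemma finrank_N (m : ℕ) :
    Module.finrank (ZMod 2) (N n m)
      = (Finset.univ.filter fun S : Finset (Fin n) => m ≤ S.card).card := by
  classical
  set b : {S : Finset (Fin n) // m ≤ S.card} → A n := fun S => E S.1 with hb
  have hE : (E (n := n)) = ⇑(B (n := n)) := funext fun S => (B_apply S).symm
  have hli : LinearIndependent (ZMod 2) b := by
    rw [hb, hE]
    exact (B (n := n)).linearIndependent.comp Subtype.val Subtype.val_injective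
  have hrange : Set.range b = E '' {S : Finset (Fin n) | m ≤ S.card} := by
    ext x
    constructor
    · rintro ⟨⟨S, hS⟩, rfl⟩; exact ⟨S, hS, rfl⟩
    · rintro ⟨S, hS, rfl⟩; exact ⟨⟨S, hS⟩, rfl⟩
  have : N n m = Submodule.span (ZMod 2) (Set.range b) := by rw [N, hrange]
  rw [this, finrank_span_eq_card hli, Fintype.card_subtype]

lemma card_filter_eq (m : ℕ) :
    (Finset.univ.filter fun S : Finset (Fin n) => m ≤ S.card).card
      = n.choose m + (Finset.univ.filter fun S : Finset (Fin n) => m + 1 ≤ S.card).card := by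
  classical
  have hsplit : (Finset.univ.filter fun S : Finset (Fin n) => m ≤ S.card)
      = (Finset.univ.filter fun S : Finset (Fin n) => S.card = m)
        ∪ (Finset.univ.filter fun S : Finset (Fin n) => m + 1 ≤ S.card) := by
    rw [← Finset.filter_or]
    apply Finset.filter_congr
    intro S _
    constructor
    · intro h; omega
    · intro h; omega
  have hdisj : Disjoint (Finset.univ.filter fun S : Finset (Fin n) => S.card = m)
      (Finset.univ.filter fun S : Finset (Fin n) => m + 1 ≤ S.card) := by
    rw [Finset.disjoint_left]
    intro S h1 h2
    rw [Finset.mem_filter] at h1 h2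
    omega
  rw [hsplit, Finset.card_union_of_disjoint hdisj]
  congr 1
  have : (Finset.univ.filter fun S : Finset (Fin n) => S.card = m)
      = Finset.powersetCard m (Finset.univ : Finset (Fin n)) := by
    rw [Finset.powersetCard_eq_filter, Finset.powerset_univ]
  rw [this, Finset.card_powersetCard, Finset.card_univ, Fintype.card_fin]

end AuxStmt14

end AuxStmt14


set_option synthInstance.maxHeartbeats 1000000 in
set_option maxHeartbeats 1000000 in
/-- For every `m ≥ 0`, the `F2`-dimension of the associated graded piece
`𝓘^m / 𝓘^{m+1}` of the augmentation filtration of `F2[(ℤ/2)ⁿ]` is `n choose m`. -/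
theorem stmt14 (n m : ℕ) :
    Module.finrank (ZMod 2)
      ((Submodule.restrictScalars (ZMod 2) (augIdeal n ^ m)) ⧸
        (Submodule.comap (Submodule.restrictScalars (ZMod 2) (augIdeal n ^ m)).subtype
          (Submodule.restrictScalars (ZMod 2) (augIdeal n ^ (m + 1))))) =
      Nat.choose n m := by
  classical
  open AuxStmt14 in
  have hle : Submodule.restrictScalars (ZMod 2) (augIdeal n ^ (m + 1))
      ≤ Submodule.restrictScalars (ZMod 2) (augIdeal n ^ m) :=
    fun x hx => Ideal.pow_le_pow_right (Nat.le_succ m) hx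
  have heq := Submodule.finrank_quotient_add_finrank
    (Submodule.comap (Submodule.restrictScalars (ZMod 2) (augIdeal n ^ m)).subtype
      (Submodule.restrictScalars (ZMod 2) (augIdeal n ^ (m + 1))))
  have hW : Module.finrank (ZMod 2)
      (Submodule.comap (Submodule.restrictScalars (ZMod 2) (augIdeal n ^ m)).subtype
        (Submodule.restrictScalars (ZMod 2) (augIdeal n ^ (m + 1))))
      = Module.finrank (ZMod 2)
        (Submodule.restrictScalars (ZMod 2) (augIdeal n ^ (m + 1))) :=
    (Submodule.comapSubtypeEquivOfLe hle).finrank_eq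
  have hV : Module.finrank (ZMod 2)
      (Submodule.restrictScalars (ZMod 2) (augIdeal n ^ m))
      = (Finset.univ.filter fun S : Finset (Fin n) => m ≤ S.card).card := by
    rw [AuxStmt14.restrict_pow_eq m, AuxStmt14.finrank_N m]
  have hV' : Module.finrank (ZMod 2)
      (Submodule.restrictScalars (ZMod 2) (augIdeal n ^ (m + 1)))
      = (Finset.univ.filter fun S : Finset (Fin n) => m + 1 ≤ S.card).card := by
    rw [AuxStmt14.restrict_pow_eq (m + 1), AuxStmt14.finrank_N (m + 1)]
  have hc := AuxStmt14.card_filter_eq (n := n) m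
  omega
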